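/- Assume X_{i,j} = P_{i,j} = 0 whenever dist(i,j) > R, and let i, j ∈ L and t ∈ ℝ satisfy e·τ < d_{i,j}. Then, with B = (eτ/d_{i,j})^{d_{i,j}} / (√(d_{i,j}) · (1 − (eτ/d_{i,j})²)), one has √‖PX‖·|C^{xx}_{i,j}(t)| ≤ ‖P‖·B, √‖XP‖·|C^{pp}_{i,j}(t)| ≤ ‖X‖·B, |C^{xp}_{i,j}(t)| ≤ B, and |C^{px}_{i,j}(t)| ≤ B. -/

import Mathlib

set_option maxHeartbeats 1000000
set_option synthInstance.maxHeartbeats 400000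

/-- The ℓ²→ℓ² operator norm of a real matrix. -/
noncomputable def l2OpNorm {V : Type*} [Fintype V] [DecidableEq V] (M : Matrix V V ℝ) : ℝ :=
  ‖Matrix.toEuclideanCLM (𝕜 := ℝ) M‖

/-- `C^{xx}_{i,j}(t) = ∑_{n≥0} (−1)^n t^{2n+1} ((PX)^n P)_{i,j}/(2n+1)!`. -/
noncomputable def Cxx {V : Type*} [Fintype V] [DecidableEq V]
    (X P : Matrix V V ℝ) (i j : V) (t : ℝ) : ℝ :=
  ∑' n : ℕ, (-1 : ℝ) ^ n * t ^ (2 * n + 1) * (((P * X) ^ n * P) i j) /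
    (Nat.factorial (2 * n + 1))

/-- `C^{pp}_{i,j}(t) = ∑_{n≥0} (−1)^n t^{2n+1} ((XP)^n X)_{i,j}/(2n+1)!`. -/
noncomputable def Cpp {V : Type*} [Fintype V] [DecidableEq V]
    (X P : Matrix V V ℝ) (i j : V) (t : ℝ) : ℝ :=
  ∑' n : ℕ, (-1 : ℝ) ^ n * t ^ (2 * n + 1) * (((X * P) ^ n * X) i j) /
    (Nat.factorial (2 * n + 1))

/-- `C^{xp}_{i,j}(t) = −∑_{n≥0} (−1)^n t^{2n} ((PX)^n)_{i,j}/(2n)!`. -/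
noncomputable def Cxp {V : Type*} [Fintype V] [DecidableEq V]
    (X P : Matrix V V ℝ) (i j : V) (t : ℝ) : ℝ :=
  -∑' n : ℕ, (-1 : ℝ) ^ n * t ^ (2 * n) * (((P * X) ^ n) i j) / (Nat.factorial (2 * n))

/-- `C^{px}_{i,j}(t) = ∑_{n≥0} (−1)^n t^{2n} ((XP)^n)_{i,j}/(2n)!`. -/
noncomputable def Cpx {V : Type*} [Fintype V] [DecidableEq V]
    (X P : Matrix V V ℝ) (i j : V) (t : ℝ) : ℝ :=
  ∑' n : ℕ, (-1 : ℝ) ^ n * t ^ (2 * n) * (((X * P) ^ n) i j) / (Nat.factorial (2 * n))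

/-! ### Auxiliary lemmas -/

lemma lr_comp_abs_le_norm {V : Type*} [Fintype V] [DecidableEq V]
    (x : EuclideanSpace ℝ V) (i : V) : |x i| ≤ ‖x‖ := by
  have h := abs_real_inner_le_norm (EuclideanSpace.single i (1:ℝ)) x
  rw [EuclideanSpace.inner_single_left] at h
  simpa [EuclideanSpace.norm_single] using h

lemma lr_entry_abs_le_l2OpNorm {V : Type*} [Fintype V] [DecidableEq V]
    (M : Matrix V V ℝ) (i j : V) : |M i j| ≤ l2OpNorm M := by
  have hx : (Matrix.toEuclideanCLM (𝕜 := ℝ) M) (EuclideanSpace.single j (1:ℝ)) i = M i j := by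
    rw [show EuclideanSpace.single j (1:ℝ) = WithLp.toLp 2 (Pi.single j 1) from rfl,
      Matrix.toEuclideanCLM_toLp, PiLp.toLp_apply,
      Matrix.mulVec_single]
    simp
  calc |M i j| = |(Matrix.toEuclideanCLM (𝕜 := ℝ) M) (EuclideanSpace.single j (1:ℝ)) i| := by
        rw [hx]
    _ ≤ ‖(Matrix.toEuclideanCLM (𝕜 := ℝ) M) (EuclideanSpace.single j (1:ℝ))‖ :=
        lr_comp_abs_le_norm _ i
    _ ≤ ‖Matrix.toEuclideanCLM (𝕜 := ℝ) M‖ * ‖EuclideanSpace.single j (1:ℝ)‖ :=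
        ContinuousLinearMap.le_opNorm _ _
    _ = l2OpNorm M := by rw [EuclideanSpace.norm_single]; simp [l2OpNorm]

lemma lr_l2OpNorm_nonneg {V : Type*} [Fintype V] [DecidableEq V] (M : Matrix V V ℝ) :
    0 ≤ l2OpNorm M := norm_nonneg _

lemma lr_l2OpNorm_mul_le {V : Type*} [Fintype V] [DecidableEq V] (A B : Matrix V V ℝ) :
    l2OpNorm (A * B) ≤ l2OpNorm A * l2OpNorm B := by
  unfold l2OpNorm
  rw [map_mul]
  exact norm_mul_le _ _

lemma lr_l2OpNorm_pow_mul_le {V : Type*} [Fintype V] [DecidableEq V] (A B : Matrix V V ℝ) :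
    ∀ n : ℕ, l2OpNorm (A ^ n * B) ≤ l2OpNorm A ^ n * l2OpNorm B
  | 0 => by simp
  | (n+1) => by
      have h1 : A ^ (n+1) * B = A ^ n * (A * B) := by rw [pow_succ, mul_assoc]
      rw [h1]
      calc l2OpNorm (A ^ n * (A * B)) ≤ l2OpNorm A ^ n * l2OpNorm (A * B) :=
            lr_l2OpNorm_pow_mul_le A (A * B) n
        _ ≤ l2OpNorm A ^ n * (l2OpNorm A * l2OpNorm B) :=
            mul_le_mul_of_nonneg_left (lr_l2OpNorm_mul_le A B)
              (pow_nonneg (lr_l2OpNorm_nonneg A) n)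
        _ = l2OpNorm A ^ (n+1) * l2OpNorm B := by ring

lemma lr_entry_pow_mul_le {V : Type*} [Fintype V] [DecidableEq V] (A B : Matrix V V ℝ)
    (i j : V) (n : ℕ) : |(A ^ n * B) i j| ≤ l2OpNorm A ^ n * l2OpNorm B :=
  (lr_entry_abs_le_l2OpNorm _ i j).trans (lr_l2OpNorm_pow_mul_le A B n)

lemma lr_entry_pow_le {V : Type*} [Fintype V] [DecidableEq V] (A : Matrix V V ℝ)
    (i j : V) (n : ℕ) : |(A ^ n) i j| ≤ l2OpNorm A ^ n := by
  cases n with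
  | zero =>
      simp only [pow_zero, Matrix.one_apply]
      split <;> simp
  | succ n =>
      rw [pow_succ]
      calc |(A ^ n * A) i j| ≤ l2OpNorm A ^ n * l2OpNorm A := lr_entry_pow_mul_le A A i j n
        _ = l2OpNorm A ^ (n+1) := by ring

lemma lr_factorial_lb (m : ℕ) (hm : 1 ≤ m) :
    Real.sqrt m * ((m : ℝ) / Real.exp 1) ^ m ≤ (Nat.factorial m : ℝ) := by
  obtain ⟨k, rfl⟩ : ∃ k, m = k + 1 := ⟨m - 1, by omega⟩
  have h1 : Real.sqrt Real.pi ≤ Stirling.stirlingSeq (k + 1) :=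
    Stirling.stirlingSeq'_antitone.le_of_tendsto
      (Stirling.tendsto_stirlingSeq_sqrt_pi.comp (Filter.tendsto_add_atTop_nat 1)) k
  have hden : (0:ℝ) < Real.sqrt (2 * ((k:ℝ)+1)) * (((k:ℝ)+1) / Real.exp 1) ^ (k+1) := by
    positivity
  rw [Stirling.stirlingSeq] at h1
  push_cast at h1 ⊢
  rw [le_div_iff₀ hden] at h1
  have h2 : Real.sqrt ((k:ℝ)+1) ≤ Real.sqrt Real.pi * Real.sqrt (2 * ((k:ℝ)+1)) := by
    rw [← Real.sqrt_mul Real.pi_pos.le]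
    apply Real.sqrt_le_sqrt
    nlinarith [Real.pi_gt_three, Nat.cast_nonneg (α := ℝ) k]
  calc Real.sqrt ((k:ℝ)+1) * (((k:ℝ)+1) / Real.exp 1) ^ (k+1)
      ≤ (Real.sqrt Real.pi * Real.sqrt (2 * ((k:ℝ)+1))) * (((k:ℝ)+1) / Real.exp 1) ^ (k+1) :=
        mul_le_mul_of_nonneg_right h2 (by positivity)
    _ = Real.sqrt Real.pi * (Real.sqrt (2 * ((k:ℝ)+1)) * (((k:ℝ)+1) / Real.exp 1) ^ (k+1)) := by
        ring
    _ ≤ (Nat.factorial (k+1) : ℝ) := by linarith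

lemma lr_loc_mul {V : Type*} [Fintype V] (G : SimpleGraph V) (hconn : G.Connected)
    (A B : Matrix V V ℝ) (a b : ℕ)
    (hA : ∀ i j, a < G.dist i j → A i j = 0) (hB : ∀ i j, b < G.dist i j → B i j = 0) :
    ∀ i j, a + b < G.dist i j → (A * B) i j = 0 := by
  intro i j h
  rw [Matrix.mul_apply]
  apply Finset.sum_eq_zero
  intro k _
  by_cases hk : a < G.dist i k
  · rw [hA i k hk, zero_mul]
  · have hkj : b < G.dist k j := by
      have ht := hconn.dist_triangle (u := i) (v := k) (w := j)
      omega
    rw [hB k j hkj, mul_zero]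

lemma lr_loc_pow {V : Type*} [Fintype V] [DecidableEq V] (G : SimpleGraph V)
    (hconn : G.Connected) (A : Matrix V V ℝ) (a : ℕ)
    (hA : ∀ i j, a < G.dist i j → A i j = 0) :
    ∀ n : ℕ, ∀ i j, n * a < G.dist i j → (A ^ n) i j = 0 := by
  intro n
  induction n with
  | zero =>
      intro i j h
      rw [pow_zero]
      have hij : i ≠ j := by
        intro hij; subst hij; simp [SimpleGraph.dist_self] at h
      exact Matrix.one_apply_ne hij
  | succ n ih =>
      intro i j h
      rw [pow_succ]
      have h' : n * a + a < G.dist i j := by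
        have : (n+1)*a = n*a + a := by ring
        omega
      exact lr_loc_mul G hconn (A ^ n) A (n * a) a ih hA i j h'

lemma lr_master_bound (τ d K : ℝ) (s : ℕ) (hτ : 0 ≤ τ) (hK : 0 ≤ K)
    (hcone : Real.exp 1 * τ < d) (f : ℕ → ℝ)
    (hf : ∀ n, |f n| ≤ K * τ ^ (2 * n + s) / (Nat.factorial (2 * n + s) : ℝ))
    (hz : ∀ n : ℕ, ((2 * n + s : ℕ) : ℝ) < d → f n = 0) :
    |∑' n, f n| ≤ K * ((Real.exp 1 * τ / d) ^ (d : ℝ) /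
      (Real.sqrt d * (1 - (Real.exp 1 * τ / d) ^ 2))) := by
  have he : (0:ℝ) < Real.exp 1 := Real.exp_pos 1
  have hd : 0 < d := lt_of_le_of_lt (by positivity) hcone
  set q : ℝ := Real.exp 1 * τ / d with hqdef
  have hq0 : 0 ≤ q := by positivity
  have hq1 : q < 1 := (div_lt_one hd).mpr hcone
  have hq2 : q ^ 2 < 1 := by nlinarith
  have h1q2 : 0 < 1 - q ^ 2 := by linarith
  have hsd : 0 < Real.sqrt d := Real.sqrt_pos.mpr hd
  rcases eq_or_lt_of_le hτ with hτ0 | hτpos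
  · -- τ = 0
    have hfz : ∀ n, f n = 0 := by
      intro n
      rcases Nat.eq_zero_or_pos (2 * n + s) with h | h
      · exact hz n (by rw [h]; exact_mod_cast hd)
      · have hb := hf n
        rw [← hτ0, zero_pow (by omega : 2 * n + s ≠ 0)] at hb
        simp only [mul_zero, zero_div] at hb
        exact abs_nonpos_iff.mp hb
    have hts : (∑' n, f n) = 0 := by
      rw [tsum_congr hfz, tsum_zero]
    rw [hts]
    have hq0' : q = 0 := by rw [hqdef, ← hτ0, mul_zero, zero_div]
    rw [hq0', Real.zero_rpow hd.ne']
    simp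
  · -- τ > 0
    have hqpos : 0 < q := by positivity
    have hex : ∃ n : ℕ, d ≤ ((2 * n + s : ℕ) : ℝ) := by
      refine ⟨⌈d⌉₊, ?_⟩
      have h1 := Nat.le_ceil d
      push_cast
      have h2 : (⌈d⌉₊ : ℝ) ≤ 2 * (⌈d⌉₊ : ℝ) + s := by
        have := Nat.cast_nonneg (α := ℝ) ⌈d⌉₊
        have := Nat.cast_nonneg (α := ℝ) s
        linarith
      linarith
    classical
    set n₀ := Nat.find hex with hn₀def
    have hn₀ : d ≤ ((2 * n₀ + s : ℕ) : ℝ) := Nat.find_spec hex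
    have hmin : ∀ m, m < n₀ → ((2 * m + s : ℕ) : ℝ) < d := by
      intro m hm
      have := Nat.find_min hex hm
      push_neg at this
      exact this
    have hg : Summable (fun n : ℕ => K * τ ^ (2 * n + s) / (Nat.factorial (2 * n + s) : ℝ)) := by
      have h0 : Summable (fun m : ℕ => K * τ ^ m / (Nat.factorial m : ℝ)) := by
        simpa [mul_div_assoc] using (Real.summable_pow_div_factorial τ).mul_left K
      exact h0.comp_injective (fun a b hab => by omega)
    have hfs : Summable f :=
      Summable.of_norm_bounded hg (fun n => by simpa [Real.norm_eq_abs] using hf n)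
    have key : ∀ kk : ℕ, K * τ ^ (2 * (n₀ + kk) + s) / (Nat.factorial (2 * (n₀ + kk) + s) : ℝ)
        ≤ K * q ^ (d : ℝ) / Real.sqrt d * (q ^ 2) ^ kk := by
      intro kk
      set m : ℕ := 2 * (n₀ + kk) + s with hm
      have hdm : d ≤ (m : ℝ) := by
        refine hn₀.trans ?_
        have : (2 * n₀ + s : ℕ) ≤ m := by omega
        exact_mod_cast this
      have hmpos : (0:ℝ) < m := lt_of_lt_of_le hd hdm
      have hm1 : 1 ≤ m := by exact_mod_cast Nat.one_le_iff_ne_zero.mpr (by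
        intro h0; rw [h0] at hmpos; norm_num at hmpos)
      have hfl := lr_factorial_lb m hm1
      have step1 : τ ^ m / (Nat.factorial m : ℝ) ≤ q ^ m / Real.sqrt d := by
        rw [div_le_div_iff₀ (by positivity) hsd]
        have hqm : q ^ m = (Real.exp 1 * τ) ^ m / d ^ m := div_pow _ _ _
        rw [hqm, div_mul_eq_mul_div, le_div_iff₀ (by positivity : (0:ℝ) < d ^ m)]
        have hA : τ ^ m * Real.sqrt d * d ^ m ≤ τ ^ m * Real.sqrt (m:ℝ) * (m:ℝ) ^ m := by
          gcongr
        have hB : τ ^ m * Real.sqrt (m:ℝ) * (m:ℝ) ^ m ≤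
            (Real.exp 1 * τ) ^ m * (Nat.factorial m : ℝ) := by
          have h1 : (Real.exp 1 * τ) ^ m * (Real.sqrt (m:ℝ) * ((m:ℝ) / Real.exp 1) ^ m)
              = τ ^ m * Real.sqrt (m:ℝ) * (m:ℝ) ^ m := by
            rw [mul_pow, div_pow]
            field_simp
          calc τ ^ m * Real.sqrt (m:ℝ) * (m:ℝ) ^ m
              = (Real.exp 1 * τ) ^ m * (Real.sqrt (m:ℝ) * ((m:ℝ) / Real.exp 1) ^ m) := h1.symm
            _ ≤ (Real.exp 1 * τ) ^ m * (Nat.factorial m : ℝ) :=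
                mul_le_mul_of_nonneg_left hfl (by positivity)
        linarith
      have step2 : q ^ m = q ^ (2 * n₀ + s) * (q ^ 2) ^ kk := by
        rw [← pow_mul, ← pow_add]
        congr 1
        omega
      have step3 : q ^ (2 * n₀ + s) ≤ q ^ (d : ℝ) := by
        rw [← Real.rpow_natCast q (2 * n₀ + s)]
        exact Real.rpow_le_rpow_of_exponent_ge hqpos hq1.le hn₀
      calc K * τ ^ m / (Nat.factorial m : ℝ) = K * (τ ^ m / (Nat.factorial m : ℝ)) :=
            mul_div_assoc _ _ _
        _ ≤ K * (q ^ m / Real.sqrt d) := mul_le_mul_of_nonneg_left step1 hK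
        _ = K * (q ^ (2 * n₀ + s) * (q ^ 2) ^ kk / Real.sqrt d) := by rw [step2]
        _ ≤ K * (q ^ (d : ℝ) * (q ^ 2) ^ kk / Real.sqrt d) := by
            apply mul_le_mul_of_nonneg_left _ hK
            gcongr
        _ = K * q ^ (d : ℝ) / Real.sqrt d * (q ^ 2) ^ kk := by ring
    have hzero : ∑ m ∈ Finset.range n₀, f m = 0 :=
      Finset.sum_eq_zero (fun m hm' => hz m (hmin m (Finset.mem_range.mp hm')))
    have htsum : ∑' n, f n = ∑' kk, f (kk + n₀) := by
      rw [← Summable.sum_add_tsum_nat_add n₀ hfs, hzero, zero_add]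
    have hsum_shift : Summable (fun kk => f (kk + n₀)) := (summable_nat_add_iff n₀).mpr hfs
    have habs : Summable (fun kk => |f (kk + n₀)|) := hsum_shift.abs
    have hgeo : Summable (fun kk : ℕ => K * q ^ (d : ℝ) / Real.sqrt d * (q ^ 2) ^ kk) :=
      (summable_geometric_of_lt_one (by positivity) hq2).mul_left _
    rw [htsum]
    have hnorm : Summable (fun kk => ‖f (kk + n₀)‖) := by
      simpa only [Real.norm_eq_abs] using habs
    calc |∑' kk, f (kk + n₀)| ≤ ∑' kk, |f (kk + n₀)| := by
          simpa only [Real.norm_eq_abs] using norm_tsum_le_tsum_norm hnorm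
      _ ≤ ∑' kk : ℕ, K * q ^ (d : ℝ) / Real.sqrt d * (q ^ 2) ^ kk := by
          refine habs.tsum_le_tsum (fun kk => ?_) hgeo
          calc |f (kk + n₀)| ≤ K * τ ^ (2 * (kk + n₀) + s) /
                (Nat.factorial (2 * (kk + n₀) + s) : ℝ) := hf _
            _ = K * τ ^ (2 * (n₀ + kk) + s) / (Nat.factorial (2 * (n₀ + kk) + s) : ℝ) := by
                rw [add_comm kk n₀]
            _ ≤ K * q ^ (d : ℝ) / Real.sqrt d * (q ^ 2) ^ kk := key kk
      _ = K * q ^ (d : ℝ) / Real.sqrt d * (1 - q ^ 2)⁻¹ := by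
          rw [tsum_mul_left, tsum_geometric_of_lt_one (by positivity) hq2]
      _ = K * (q ^ (d : ℝ) / (Real.sqrt d * (1 - q ^ 2))) := by
          field_simp

lemma lr_odd_series_bound {V : Type*} [Fintype V] [DecidableEq V]
    (G : SimpleGraph V) (hconn : G.Connected) (R : ℕ) (hR : 1 ≤ R)
    (A B : Matrix V V ℝ)
    (hA : ∀ i j, R < G.dist i j → A i j = 0) (hB : ∀ i j, R < G.dist i j → B i j = 0)
    (i j : V) (t τ : ℝ) (hτ : 0 ≤ τ)
    (hτle : Real.sqrt (l2OpNorm (B * A)) * |t| ≤ τ)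
    (hcone : Real.exp 1 * τ < (G.dist i j : ℝ) / R) :
    Real.sqrt (l2OpNorm (B * A)) *
      |∑' n : ℕ, (-1 : ℝ) ^ n * t ^ (2 * n + 1) * (((B * A) ^ n * B) i j) /
        (Nat.factorial (2 * n + 1))| ≤
    l2OpNorm B * ((Real.exp 1 * τ / ((G.dist i j : ℝ) / R)) ^ ((G.dist i j : ℝ) / R) /
      (Real.sqrt ((G.dist i j : ℝ) / R) *
        (1 - (Real.exp 1 * τ / ((G.dist i j : ℝ) / R)) ^ 2))) := by
  set a : ℝ := Real.sqrt (l2OpNorm (B * A)) with hadef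
  have ha0 : 0 ≤ a := Real.sqrt_nonneg _
  have ha2 : a ^ 2 = l2OpNorm (B * A) := Real.sq_sqrt (lr_l2OpNorm_nonneg _)
  have hRpos : (0:ℝ) < R := by exact_mod_cast hR
  have hf : ∀ n : ℕ, |a * ((-1 : ℝ) ^ n * t ^ (2 * n + 1) * (((B * A) ^ n * B) i j) /
      (Nat.factorial (2 * n + 1)))| ≤
      l2OpNorm B * τ ^ (2 * n + 1) / (Nat.factorial (2 * n + 1) : ℝ) := by
    intro n
    have hE := lr_entry_pow_mul_le (B * A) B i j n
    calc |a * ((-1 : ℝ) ^ n * t ^ (2 * n + 1) * (((B * A) ^ n * B) i j) /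
        (Nat.factorial (2 * n + 1)))|
        = a * |t| ^ (2 * n + 1) * |((B * A) ^ n * B) i j| /
          (Nat.factorial (2 * n + 1) : ℝ) := by
          simp only [abs_mul, abs_div, abs_pow, abs_neg, abs_one, one_pow, one_mul,
            Nat.abs_cast, abs_of_nonneg ha0]
          ring
      _ ≤ a * |t| ^ (2 * n + 1) * (l2OpNorm (B * A) ^ n * l2OpNorm B) /
          (Nat.factorial (2 * n + 1) : ℝ) := by gcongr
      _ = l2OpNorm B * (a * |t|) ^ (2 * n + 1) / (Nat.factorial (2 * n + 1) : ℝ) := by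
          rw [← ha2]; ring
      _ ≤ l2OpNorm B * τ ^ (2 * n + 1) / (Nat.factorial (2 * n + 1) : ℝ) := by
          gcongr
          exact lr_l2OpNorm_nonneg B
  have hz : ∀ n : ℕ, ((2 * n + 1 : ℕ) : ℝ) < (G.dist i j : ℝ) / R →
      a * ((-1 : ℝ) ^ n * t ^ (2 * n + 1) * (((B * A) ^ n * B) i j) /
        (Nat.factorial (2 * n + 1))) = 0 := by
    intro n hlt
    have hdist : (2 * n + 1) * R < G.dist i j := by
      have h1 : ((2 * n + 1 : ℕ) : ℝ) * R < G.dist i j := (lt_div_iff₀ hRpos).mp hlt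
      exact_mod_cast h1
    have hBA : ∀ i j, R + R < G.dist i j → (B * A) i j = 0 :=
      lr_loc_mul G hconn B A R R hB hA
    have hp : ∀ i j, n * (R + R) < G.dist i j → ((B * A) ^ n) i j = 0 :=
      lr_loc_pow G hconn _ _ hBA n
    have heq : n * (R + R) + R = (2 * n + 1) * R := by ring
    have hzero : ((B * A) ^ n * B) i j = 0 :=
      lr_loc_mul G hconn ((B * A) ^ n) B (n * (R + R)) R hp hB i j (by omega)
    rw [hzero]
    simp
  have key := lr_master_bound τ ((G.dist i j : ℝ) / R) (l2OpNorm B) 1 hτ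
    (lr_l2OpNorm_nonneg B) hcone
    (fun n => a * ((-1 : ℝ) ^ n * t ^ (2 * n + 1) * (((B * A) ^ n * B) i j) /
      (Nat.factorial (2 * n + 1)))) hf hz
  rw [tsum_mul_left, abs_mul, abs_of_nonneg ha0] at key
  exact key

lemma lr_even_series_bound {V : Type*} [Fintype V] [DecidableEq V]
    (G : SimpleGraph V) (hconn : G.Connected) (R : ℕ) (hR : 1 ≤ R)
    (A B : Matrix V V ℝ)
    (hA : ∀ i j, R < G.dist i j → A i j = 0) (hB : ∀ i j, R < G.dist i j → B i j = 0)
    (i j : V) (t τ : ℝ) (hτ : 0 ≤ τ)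
    (hτle : Real.sqrt (l2OpNorm (B * A)) * |t| ≤ τ)
    (hcone : Real.exp 1 * τ < (G.dist i j : ℝ) / R) :
    |∑' n : ℕ, (-1 : ℝ) ^ n * t ^ (2 * n) * (((B * A) ^ n) i j) /
        (Nat.factorial (2 * n))| ≤
    (Real.exp 1 * τ / ((G.dist i j : ℝ) / R)) ^ ((G.dist i j : ℝ) / R) /
      (Real.sqrt ((G.dist i j : ℝ) / R) *
        (1 - (Real.exp 1 * τ / ((G.dist i j : ℝ) / R)) ^ 2)) := by
  set a : ℝ := Real.sqrt (l2OpNorm (B * A)) with hadef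
  have ha0 : 0 ≤ a := Real.sqrt_nonneg _
  have ha2 : a ^ 2 = l2OpNorm (B * A) := Real.sq_sqrt (lr_l2OpNorm_nonneg _)
  have hRpos : (0:ℝ) < R := by exact_mod_cast hR
  have hf : ∀ n : ℕ, |(-1 : ℝ) ^ n * t ^ (2 * n) * (((B * A) ^ n) i j) /
      (Nat.factorial (2 * n))| ≤
      1 * τ ^ (2 * n + 0) / (Nat.factorial (2 * n + 0) : ℝ) := by
    intro n
    simp only [add_zero, one_mul]
    have hE := lr_entry_pow_le (B * A) i j n
    calc |(-1 : ℝ) ^ n * t ^ (2 * n) * (((B * A) ^ n) i j) / (Nat.factorial (2 * n))|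
        = |t| ^ (2 * n) * |((B * A) ^ n) i j| / (Nat.factorial (2 * n) : ℝ) := by
          simp only [abs_mul, abs_div, abs_pow, abs_neg, abs_one, one_pow, one_mul,
            Nat.abs_cast]
      _ ≤ |t| ^ (2 * n) * l2OpNorm (B * A) ^ n / (Nat.factorial (2 * n) : ℝ) := by gcongr
      _ = (a * |t|) ^ (2 * n) / (Nat.factorial (2 * n) : ℝ) := by
          rw [← ha2]; ring
      _ ≤ τ ^ (2 * n) / (Nat.factorial (2 * n) : ℝ) := by
          gcongr
  have hz : ∀ n : ℕ, ((2 * n + 0 : ℕ) : ℝ) < (G.dist i j : ℝ) / R →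
      (-1 : ℝ) ^ n * t ^ (2 * n) * (((B * A) ^ n) i j) / (Nat.factorial (2 * n)) = 0 := by
    intro n hlt
    rw [add_zero] at hlt
    have hdist : 2 * n * R < G.dist i j := by
      have h1 : ((2 * n : ℕ) : ℝ) * R < G.dist i j := (lt_div_iff₀ hRpos).mp hlt
      exact_mod_cast h1
    have hBA : ∀ i j, R + R < G.dist i j → (B * A) i j = 0 :=
      lr_loc_mul G hconn B A R R hB hA
    have heq : n * (R + R) = 2 * n * R := by ring
    have hzero : ((B * A) ^ n) i j = 0 :=
      lr_loc_pow G hconn _ _ hBA n i j (by omega)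
    rw [hzero]
    simp
  have key := lr_master_bound τ ((G.dist i j : ℝ) / R) 1 0 hτ zero_le_one hcone
    (fun n => (-1 : ℝ) ^ n * t ^ (2 * n) * (((B * A) ^ n) i j) /
      (Nat.factorial (2 * n))) hf hz
  rw [one_mul] at key
  exact key

/-- **Lieb-Robinson bounds making the causal cone explicit.** For local couplings of
range `R`, if `e·τ < d_{i,j} = dist(i,j)/R`, then with
`B = (eτ/d)^d / (√d · (1 − (eτ/d)²))` all four commutator series obey the stated bounds. -/
theorem lieb_robinson_local_causal_cone {V : Type*} [Fintype V] [DecidableEq V]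
    (G : SimpleGraph V) (hconn : G.Connected) (R : ℕ) (hR : 1 ≤ R)
    (X P : Matrix V V ℝ) (hX : X.IsSymm) (hP : P.IsSymm)
    (hXloc : ∀ i j : V, R < G.dist i j → X i j = 0)
    (hPloc : ∀ i j : V, R < G.dist i j → P i j = 0)
    (i j : V) (t : ℝ)
    (hcone : Real.exp 1 *
        (max (Real.sqrt (l2OpNorm (P * X))) (Real.sqrt (l2OpNorm (X * P))) * |t|) <
        (G.dist i j : ℝ) / R) :
    let τ : ℝ := max (Real.sqrt (l2OpNorm (P * X))) (Real.sqrt (l2OpNorm (X * P))) * |t|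
    let d : ℝ := (G.dist i j : ℝ) / R
    let B : ℝ := (Real.exp 1 * τ / d) ^ d / (Real.sqrt d * (1 - (Real.exp 1 * τ / d) ^ 2))
    Real.sqrt (l2OpNorm (P * X)) * |Cxx X P i j t| ≤ l2OpNorm P * B ∧
    Real.sqrt (l2OpNorm (X * P)) * |Cpp X P i j t| ≤ l2OpNorm X * B ∧
    |Cxp X P i j t| ≤ B ∧ |Cpx X P i j t| ≤ B := by
  intro τ d B
  have hτ0 : 0 ≤ τ :=
    mul_nonneg (le_trans (Real.sqrt_nonneg _) (le_max_left _ _)) (abs_nonneg t)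
  have h1le : Real.sqrt (l2OpNorm (P * X)) * |t| ≤ τ :=
    mul_le_mul_of_nonneg_right (le_max_left _ _) (abs_nonneg t)
  have h2le : Real.sqrt (l2OpNorm (X * P)) * |t| ≤ τ :=
    mul_le_mul_of_nonneg_right (le_max_right _ _) (abs_nonneg t)
  refine ⟨?_, ?_, ?_, ?_⟩
  · exact lr_odd_series_bound G hconn R hR X P hXloc hPloc i j t τ hτ0 h1le hcone
  · exact lr_odd_series_bound G hconn R hR P X hPloc hXloc i j t τ hτ0 h2le hcone
  · unfold Cxp
    rw [abs_neg]
    exact lr_even_series_bound G hconn R hR X P hXloc hPloc i j t τ hτ0 h1le hcone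
  · exact lr_even_series_bound G hconn R hR P X hPloc hXloc i j t τ hτ0 h2le hcone
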